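/- For any n, m ∈ ℕ, the restriction to the rectangle S_{n,m} of any colour configuration ξ ∈ {0,1}^{ℤ²} contains either a black vertical crossing of S_{n,m} or a white horizontal *-crossing of S_{n,m}, but never both; in particular, the event V^b_{n,m} equals the complement of the event H^{w*}_{n,m}. -/

import Mathlib

/-!
Common definitions for the Divide-and-Colour (DaC) model of
Bálint, Camia and Meester, "Sharp phase transition and critical
behaviour in 2D divide and colour models".

The model is built concretely: a single uniform random variable on `(0,1]`
is decomposed into countably many i.i.d. uniform random variables (via its
binary digits); one family of uniforms drives the Bernoulli(p) bond
percolation (the edge configuration), and an independent family of uniforms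
attaches an independent Bernoulli(r) colour to each bond cluster (the colour
of a cluster is determined by the uniform label of its canonical
representative, the vertex of minimal encoding).  The DaC measure
`ℙ_{p,r}` is the pushforward of Lebesgue measure on `(0,1]` under the map
producing the pair (edge configuration, colour configuration).
-/

open MeasureTheory ENNReal

namespace DaC

/-- Vertices of the lattice. -/
abbrev V : Type := ℤ × ℤ

/-- Square lattice adjacency: Euclidean distance `1`. -/
def SqAdj (u v : V) : Prop := (u.1 - v.1) ^ 2 + (u.2 - v.2) ^ 2 = 1

/-- `*`-adjacency (matching graph of the square lattice):
Euclidean distance `1` or `√2`. -/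
def StarAdj (u v : V) : Prop :=
  (u.1 - v.1) ^ 2 + (u.2 - v.2) ^ 2 = 1 ∨ (u.1 - v.1) ^ 2 + (u.2 - v.2) ^ 2 = 2

/-- Triangular lattice adjacency. -/
def TriAdj (u v : V) : Prop :=
  (u.1 - v.1, u.2 - v.2) ∈
    ({(1, 0), (-1, 0), (0, 1), (0, -1), (1, 1), (-1, -1)} : Set (ℤ × ℤ))

/-- Classical indicator of a proposition, as a boolean. -/
noncomputable def boolOf (P : Prop) : Bool := @decide P (Classical.propDecidable P)

/-- The `n`-th binary digit of a real number `x ∈ (0,1]`. -/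
noncomputable def bit (n : ℕ) (x : ℝ) : Bool := boolOf (⌊x * 2 ^ (n + 1)⌋ % 2 = 1)

/-- A countable family of i.i.d. uniform random variables on `[0,1]`, extracted
from a single uniform sample `x` by splitting its binary digits. -/
noncomputable def unif (i : ℕ) (x : ℝ) : ℝ :=
  ∑' k : ℕ, if bit (Nat.pair i k) x then ((2 : ℝ)⁻¹) ^ (k + 1) else 0

/-- A symmetric encoding of (unordered) pairs of vertices. -/
noncomputable def eIdx (u v : V) : ℕ :=
  min (Encodable.encode (u, v)) (Encodable.encode (v, u))

/-- The uniform label attached to the edge `{u,v}`. -/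
noncomputable def edgeU (u v : V) (x : ℝ) : ℝ := unif (2 * eIdx u v) x

/-- The uniform label attached to the vertex `v` (independent of the edge labels). -/
noncomputable def vtxU (v : V) (x : ℝ) : ℝ := unif (2 * Encodable.encode v + 1) x

/-- Edge configurations: a boolean (open/closed) for each (ordered) pair of
vertices; configurations arising from the model are symmetric and are
supported on pairs of adjacent vertices. -/
abbrev EdgeCfg : Type := V → V → Bool

/-- Colour configurations: a colour (black = `true`, white = `false`) for each vertex. -/
abbrev ColourCfg : Type := V → Bool

/-- Full configurations of the DaC model: an edge configuration together with
a colour configuration. -/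
abbrev Config : Type := EdgeCfg × ColourCfg

/-- The Bernoulli(p) edge configuration determined by the uniform sample `x`,
on the lattice with adjacency `adj`: an edge `{u,v}` of the lattice is open
iff its uniform label is `< p`. -/
noncomputable def edgeCfg (adj : V → V → Prop) (p : ℝ) (x : ℝ) : EdgeCfg :=
  fun u v => boolOf (adj u v) && boolOf (edgeU u v x < p)

/-- Connectivity through open edges of the edge configuration `η`. -/
def Conn (η : EdgeCfg) (u v : V) : Prop :=
  Relation.ReflTransGen (fun a b => η a b = true) u v

/-- The `p`-cluster of the vertex `v`: its connected component in the graph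
retaining only open edges. -/
def pCluster (η : EdgeCfg) (v : V) : Set V := {w | Conn η v w}

/-- Canonical representative of the `p`-cluster of `v`: the vertex of the
cluster with minimal encoding. -/
noncomputable def clusterRep (η : EdgeCfg) (v : V) : V :=
  (Encodable.decode (α := V) (sInf (Encodable.encode '' pCluster η v))).getD v

/-- The colour configuration with parameters `p, r` determined by the uniform
sample `x`: every `p`-cluster is coloured black (with probability `r`)
or white, independently of all other `p`-clusters, according to the uniform
label of its canonical representative. -/
noncomputable def colourCfg (adj : V → V → Prop) (p r : ℝ) (x : ℝ) : ColourCfg :=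
  fun v => boolOf (vtxU (clusterRep (edgeCfg adj p x) v) x < r)

/-- The uniform sample: Lebesgue measure on `(0,1]`. -/
noncomputable def base : Measure ℝ := volume.restrict (Set.Ioc 0 1)

/-- `ν_p`: the product Bernoulli(p) measure on edge configurations of the
lattice with adjacency `adj`. -/
noncomputable def edgeMeasure (adj : V → V → Prop) (p : ℝ) : Measure EdgeCfg :=
  base.map (edgeCfg adj p)

/-- `ℙ_{p,r}`: the DaC measure on pairs (edge configuration, colour
configuration) for the lattice with adjacency `adj`. -/
noncomputable def DaCMeasure (adj : V → V → Prop) (p r : ℝ) : Measure Config :=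
  base.map (fun x => (edgeCfg adj p x, colourCfg adj p r x))

/-- Monochromatic connectivity: `u` and `v` are joined by a path (for the
adjacency `adj`) all of whose vertices have colour `c`. -/
def MonoConn (adj : V → V → Prop) (ξ : ColourCfg) (c : Bool) (u v : V) : Prop :=
  Relation.ReflTransGen (fun a b => adj a b ∧ ξ a = c ∧ ξ b = c) u v

/-- The colour-`c` cluster of `v` (for the adjacency `adj`): empty if `v` does
not have colour `c`, and otherwise the maximal `adj`-connected set of
`c`-coloured vertices containing `v`. -/
def monoCluster (adj : V → V → Prop) (ξ : ColourCfg) (c : Bool) (v : V) : Set V :=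
  {w | ξ v = c ∧ MonoConn adj ξ c v w}

/-- The origin. -/
def origin : V := (0, 0)

/-- The size (cardinality) of a set of vertices, with values in `ℝ≥0∞`. -/
noncomputable def sizeE (S : Set V) : ℝ≥0∞ := S.encard

/-- The probability, under the DaC measure with edge adjacency `eadj` and
parameters `p, r`, that the origin lies in an infinite colour-`c` cluster for
the adjacency `cadj`. -/
noncomputable def percProb (eadj cadj : V → V → Prop) (c : Bool) (p r : ℝ) : ℝ≥0∞ :=
  DaCMeasure eadj p r {ω | (monoCluster cadj ω.2 c origin).Infinite}

/-- `Θ(p,r)` for the square lattice: probability that the origin lies in an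
infinite black `r`-cluster. -/
noncomputable def thetaSq (p r : ℝ) : ℝ≥0∞ := percProb SqAdj SqAdj true p r

/-- `Θ*(p,s)` for the square lattice: the `ℙ_{p,1-s}`-probability that the
origin lies in an infinite white `*`-cluster. -/
noncomputable def thetaStarSq (p s : ℝ) : ℝ≥0∞ := percProb SqAdj StarAdj false p (1 - s)

/-- `Θ(p,r)` for the triangular lattice. -/
noncomputable def thetaTri (p r : ℝ) : ℝ≥0∞ := percProb TriAdj TriAdj true p r

/-- The critical colouring density `r_c(p)` of the square lattice DaC model. -/
noncomputable def rcSq (p : ℝ) : ℝ :=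
  sSup {r : ℝ | r ∈ Set.Icc (0 : ℝ) 1 ∧ thetaSq p r = 0}

/-- The critical colouring density `r_c*(p)` for white `*`-percolation. -/
noncomputable def rcStarSq (p : ℝ) : ℝ :=
  sSup {s : ℝ | s ∈ Set.Icc (0 : ℝ) 1 ∧ thetaStarSq p s = 0}

/-- The critical colouring density `r_c(p)` of the triangular lattice DaC model. -/
noncomputable def rcTri (p : ℝ) : ℝ :=
  sSup {r : ℝ | r ∈ Set.Icc (0 : ℝ) 1 ∧ thetaTri p r = 0}

/-! ### Rectangles and crossings -/

/-- The rectangle `S_{n,m} = ([0,n] × [0,m]) ∩ ℤ²`. -/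
def Rect (n m : ℕ) : Set V :=
  {v | 0 ≤ v.1 ∧ v.1 ≤ (n : ℤ) ∧ 0 ≤ v.2 ∧ v.2 ≤ (m : ℤ)}

/-- The top side of `S_{n,m}`. -/
def TopSide (n m : ℕ) : Set V := {v | v ∈ Rect n m ∧ v.2 = (m : ℤ)}

/-- The bottom side of `S_{n,m}`. -/
def BotSide (n m : ℕ) : Set V := {v | v ∈ Rect n m ∧ v.2 = 0}

/-- The left side of `S_{n,m}`. -/
def LeftSide (n m : ℕ) : Set V := {v | v ∈ Rect n m ∧ v.1 = 0}

/-- The right side of `S_{n,m}`. -/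
def RightSide (n m : ℕ) : Set V := {v | v ∈ Rect n m ∧ v.1 = (n : ℤ)}

/-- There is a path (for the adjacency `adj`), all of whose vertices lie in the
region `R` and satisfy the predicate `good`, from the set `A` to the set `B`. -/
def HasCrossing (adj : V → V → Prop) (good : V → Prop) (R A B : Set V) : Prop :=
  ∃ (k : ℕ) (f : Fin (k + 1) → V),
    (∀ i, f i ∈ R ∧ good (f i)) ∧
    (∀ i : Fin k, adj (f i.castSucc) (f i.succ)) ∧
    f 0 ∈ A ∧ f (Fin.last k) ∈ B

/-- `V^b_{n,m}` as a set of colour configurations: there is a black vertical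
crossing of `S_{n,m}` (for the adjacency `adj`). -/
def VertBC (adj : V → V → Prop) (n m : ℕ) : Set ColourCfg :=
  {ξ | HasCrossing adj (fun v => ξ v = true) (Rect n m) (TopSide n m) (BotSide n m)}

/-- `V^{w*}_{n,m}` as a set of colour configurations: there is a white vertical
`*`-crossing of `S_{n,m}`. -/
def VertWStarC (n m : ℕ) : Set ColourCfg :=
  {ξ | HasCrossing StarAdj (fun v => ξ v = false) (Rect n m) (TopSide n m) (BotSide n m)}

/-- `H^{w*}_{n,m}` as a set of colour configurations: there is a white
horizontal `*`-crossing of `S_{n,m}`. -/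
def HorizWStarC (n m : ℕ) : Set ColourCfg :=
  {ξ | HasCrossing StarAdj (fun v => ξ v = false) (Rect n m) (LeftSide n m) (RightSide n m)}

/-- The event (set of full configurations) determined by a set of colour
configurations. -/
def colourEvent (C : Set ColourCfg) : Set Config := {ω | ω.2 ∈ C}

/-! ### Events depending on colours, increasing events, pivotal clusters -/

/-- The event `A` is defined in terms of the colours of the vertices in `W`. -/
def DependsOnColoursIn (A : Set Config) (W : Set V) : Prop :=
  ∀ ω ω' : Config, (∀ v ∈ W, ω.2 v = ω'.2 v) → (ω ∈ A ↔ ω' ∈ A)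

/-- The event `A` is increasing (for the partial order comparing colour
configurations pointwise, black = `true` above white = `false`). -/
def IncreasingColourEvent (A : Set Config) : Prop :=
  ∀ ω ω' : Config, (∀ v : V, ω.2 v = true → ω'.2 v = true) → ω ∈ A → ω' ∈ A

/-- Flip the colours of the vertices of `C`. -/
noncomputable def flipOn (C : Set V) (ξ : ColourCfg) : ColourCfg :=
  fun v => @ite _ (v ∈ C) (Classical.propDecidable _) (!ξ v) (ξ v)

/-- The set `C` is a pivotal `p`-cluster for the event `A` in the
configuration `ω`: `C` is a `p`-cluster of the edge configuration of `ω`, and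
flipping the colour of (all the vertices of) `C` changes whether the
configuration belongs to `A`. -/
def IsPivotal (A : Set Config) (ω : Config) (C : Set V) : Prop :=
  (∃ v : V, C = pCluster ω.1 v) ∧ ¬ (ω ∈ A ↔ (ω.1, flipOn C ω.2) ∈ A)

/-- `n(A)`: the number of pivotal `p`-clusters for the event `A`, with values
in `ℝ≥0∞`. -/
noncomputable def numPivotal (A : Set Config) (ω : Config) : ℝ≥0∞ :=
  {C : Set V | IsPivotal A ω C}.encard

/-! ### Barriers -/

/-- Connectivity in the square lattice avoiding the edges of `E`. -/
def AvoidConn (E : Set (V × V)) (u v : V) : Prop :=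
  Relation.ReflTransGen (fun a b => SqAdj a b ∧ (a, b) ∉ E ∧ (b, a) ∉ E) u v

/-- `E` is a barrier: a set of edges of the square lattice whose removal
(keeping the end-vertices) separates `ℤ²` into two or more connected
components, exactly one of which is infinite. -/
def IsBarrier (E : Set (V × V)) : Prop :=
  (∀ e ∈ E, SqAdj e.1 e.2) ∧
  (∃ v, {w | AvoidConn E v w}.Infinite) ∧
  (∀ v w, {x | AvoidConn E v x}.Infinite → {x | AvoidConn E w x}.Infinite → AvoidConn E v w) ∧
  (∃ v, {w | AvoidConn E v w}.Finite)

/-- The exterior of a barrier: its unique infinite complementary component. -/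
def barrierExt (E : Set (V × V)) : Set V := {v | {w | AvoidConn E v w}.Infinite}

/-- The interior of a barrier: the union of the finite complementary components. -/
def barrierInt (E : Set (V × V)) : Set V := {v | {w | AvoidConn E v w}.Finite}

/-- The event `A ⊆ EdgeCfg` is increasing (opening edges preserves it). -/
def IncreasingEdgeEvent (A : Set EdgeCfg) : Prop :=
  ∀ η η' : EdgeCfg, (∀ a b : V, η a b = true → η' a b = true) → η ∈ A → η' ∈ A

/-- The event `A ⊆ EdgeCfg` depends only on the states of the edges both of
whose endpoints lie in `W`. -/
def DependsOnEdgesIn (A : Set EdgeCfg) (W : Set V) : Prop :=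
  ∀ η η' : EdgeCfg, (∀ a b : V, a ∈ W → b ∈ W → η a b = η' a b) → (η ∈ A ↔ η' ∈ A)

/-! ### Translations -/

/-- Translation of configurations by the vector `u`. -/
def shift (u : V) (ω : Config) : Config :=
  (fun a b => ω.1 (a + u) (b + u), fun a => ω.2 (a + u))

lemma sq_cases {a b : ℤ} (h : a^2 + b^2 = 1) :
    (a = 0 ∧ (b = 1 ∨ b = -1)) ∨ (b = 0 ∧ (a = 1 ∨ a = -1)) := by
  have ha2 : a^2 ≤ 1 := by nlinarith [sq_nonneg b]
  have hb2 : b^2 ≤ 1 := by nlinarith [sq_nonneg a]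
  have ha : -1 ≤ a ∧ a ≤ 1 := by constructor <;> nlinarith
  have hb : -1 ≤ b ∧ b ≤ 1 := by constructor <;> nlinarith
  obtain ⟨ha1, ha2'⟩ := ha; obtain ⟨hb1, hb2'⟩ := hb
  interval_cases a <;> interval_cases b <;> omega

lemma star_cases {a b : ℤ} (h : a^2 + b^2 = 1 ∨ a^2 + b^2 = 2) :
    (-1 ≤ a ∧ a ≤ 1 ∧ -1 ≤ b ∧ b ≤ 1 ∧ ¬(a = 0 ∧ b = 0)) := by
  have ha2 : a^2 ≤ 2 := by rcases h with h | h <;> nlinarith [sq_nonneg b]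
  have hb2 : b^2 ≤ 2 := by rcases h with h | h <;> nlinarith [sq_nonneg a]
  refine ⟨by nlinarith, by nlinarith, by nlinarith, by nlinarith, ?_⟩
  rintro ⟨rfl, rfl⟩; simp at h

lemma sqAdj_cases {u v : V} (h : SqAdj u v) :
    (u.1 = v.1 ∧ (u.2 = v.2 + 1 ∨ u.2 = v.2 - 1)) ∨
    (u.2 = v.2 ∧ (u.1 = v.1 + 1 ∨ u.1 = v.1 - 1)) := by
  have := sq_cases h; omega

lemma starAdj_cases {u v : V} (h : StarAdj u v) :
    v.1 - 1 ≤ u.1 ∧ u.1 ≤ v.1 + 1 ∧ v.2 - 1 ≤ u.2 ∧ u.2 ≤ v.2 + 1 ∧ u ≠ v := by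
  have := star_cases h
  refine ⟨by omega, by omega, by omega, by omega, ?_⟩
  intro he; rw [he] at this; simp at this

lemma sqAdj_of {u v : V} (h : (u.1 = v.1 ∧ (u.2 = v.2 + 1 ∨ u.2 = v.2 - 1)) ∨
    (u.2 = v.2 ∧ (u.1 = v.1 + 1 ∨ u.1 = v.1 - 1))) : SqAdj u v := by
  unfold SqAdj; rcases h with ⟨h1, h2 | h2⟩ | ⟨h1, h2 | h2⟩ <;> rw [h1, h2] <;> ring

lemma starAdj_of {u v : V} (hne : u ≠ v) (h1 : v.1 - 1 ≤ u.1 ∧ u.1 ≤ v.1 + 1)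
    (h2 : v.2 - 1 ≤ u.2 ∧ u.2 ≤ v.2 + 1) : StarAdj u v := by
  unfold StarAdj
  have hne' : ¬(u.1 = v.1 ∧ u.2 = v.2) := by
    intro ⟨h, h'⟩; exact hne (Prod.ext h h')
  have : (u.1 - v.1 = -1 ∨ u.1 - v.1 = 0 ∨ u.1 - v.1 = 1) ∧
         (u.2 - v.2 = -1 ∨ u.2 - v.2 = 0 ∨ u.2 - v.2 = 1) ∧
         ¬(u.1 - v.1 = 0 ∧ u.2 - v.2 = 0) := by omega
  obtain ⟨ha | ha | ha, hb | hb | hb, hc⟩ := this <;> rw [ha, hb] <;> simp_all <;> ring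

/-- Turn a `ReflTransGen` chain into an `ℕ`-indexed walk. -/
lemma rtg_exists_fn {α : Type*} {r : α → α → Prop} {a b : α} (h : Relation.ReflTransGen r a b) :
    ∃ (N : ℕ) (g : ℕ → α), g 0 = a ∧ g N = b ∧ ∀ i < N, r (g i) (g (i+1)) := by
  induction h with
  | refl => exact ⟨0, fun _ => a, rfl, rfl, by omega⟩
  | @tail b' c' h hbc ih =>
    obtain ⟨N, g, hg0, hgN, hstep⟩ := ih
    refine ⟨N + 1, fun i => if i ≤ N then g i else c', by simp [hg0], by simp, ?_⟩
    intro i hi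
    by_cases hiN : i < N
    · simp only [if_pos (by omega : i ≤ N), if_pos (by omega : i + 1 ≤ N)]
      exact hstep i hiN
    · have hEq : i = N := by omega
      simp only [hEq, if_pos le_rfl, if_neg (by omega : ¬ N + 1 ≤ N), hgN]
      exact hbc

/-- Telescoping sum in `ZMod 2`. -/
lemma tele_sum (F : ℕ → V) (T : ℕ) (S : V → ZMod 2) :
    ∑ t ∈ Finset.range T, (S (F t) + S (F (t+1))) = S (F 0) + S (F T) := by
  induction T with
  | zero => simp [CharTwo.add_self_eq_zero]
  | succ T ih =>
    rw [Finset.sum_range_succ, ih]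
    have : ∀ x y z : ZMod 2, (x + y) + (y + z) = x + z := by decide
    exact this _ _ _



/-- crossing indicator: step (a,b) is horizontal at height < v.2 between columns v.1-1, v.1 -/
def cInd (v a b : V) : ZMod 2 :=
  if a.2 = b.2 ∧ a.2 < v.2 ∧ ((a.1 = v.1 - 1 ∧ b.1 = v.1) ∨ (a.1 = v.1 ∧ b.1 = v.1 - 1))
  then 1 else 0

def Wray (F : ℕ → V) (T : ℕ) (v : V) : ZMod 2 :=
  ∑ t ∈ Finset.range T, cInd v (F t) (F (t+1))

/-- Per-step identity for the horizontal move. -/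
lemma stepid_h (v a b : V) (hab : (a.1-b.1)^2 + (a.2-b.2)^2 = 1) :
    cInd v a b + cInd (v.1+1, v.2) a b
      + ((if a.1 = v.1 ∧ a.2 < v.2 then (1 : ZMod 2) else 0)
        + (if b.1 = v.1 ∧ b.2 < v.2 then (1 : ZMod 2) else 0))
    = (if (a = (v.1, v.2-1) ∧ b = (v.1, v.2)) ∨ (a = (v.1, v.2) ∧ b = (v.1, v.2-1))
       then 1 else 0) := by
  obtain ⟨va, vb⟩ := v
  obtain ⟨a1, a2⟩ := a
  obtain ⟨b1, b2⟩ := b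
  have h : (a1 = b1 ∧ (a2 = b2 + 1 ∨ a2 = b2 - 1)) ∨ (a2 = b2 ∧ (a1 = b1 + 1 ∨ a1 = b1 - 1)) := by
    have := @DaC.sq_cases (a1 - b1) (a2 - b2) (by push_cast at hab ⊢; linarith) ; omega
  simp only [cInd, Prod.mk.injEq, Prod.ext_iff]
  split_ifs <;> first | decide | (exfalso; omega)

/-- Per-step identity for the vertical move. -/
lemma stepid_v (v a b : V) (hab : (a.1-b.1)^2 + (a.2-b.2)^2 = 1) :
    cInd (v.1, v.2+1) a b + cInd v a b
    = (if (a = (v.1-1, v.2) ∧ b = (v.1, v.2)) ∨ (a = (v.1, v.2) ∧ b = (v.1-1, v.2))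
       then 1 else 0) := by
  obtain ⟨va, vb⟩ := v
  obtain ⟨a1, a2⟩ := a
  obtain ⟨b1, b2⟩ := b
  have h : (a1 = b1 ∧ (a2 = b2 + 1 ∨ a2 = b2 - 1)) ∨ (a2 = b2 ∧ (a1 = b1 + 1 ∨ a1 = b1 - 1)) := by
    have := @DaC.sq_cases (a1 - b1) (a2 - b2) (by push_cast at hab ⊢; linarith) ; omega
  simp only [cInd, Prod.mk.injEq, Prod.ext_iff]
  split_ifs <;> first | decide | (exfalso; omega)

section Moves
variable (F : ℕ → V) (T : ℕ)
variable (hstep : ∀ t < T, ((F t).1 - (F (t+1)).1)^2 + ((F t).2 - (F (t+1)).2)^2 = 1)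

include hstep

/-- Horizontal move lemma. -/
lemma wray_hmove (v : V) (hv0 : 0 ≤ v.2) (hvm : (F 0).2 ≥ v.2) (hT2 : (F T).2 < v.2)
    (hkill : ∀ t < T, ¬((F t = (v.1, v.2-1) ∧ F (t+1) = (v.1, v.2)) ∨
        (F t = (v.1, v.2) ∧ F (t+1) = (v.1, v.2-1)))) :
    Wray F T v + Wray F T (v.1+1, v.2) = if (F T).1 = v.1 then 1 else 0 := by
  classical
  have key : ∀ t ∈ Finset.range T,
      cInd v (F t) (F (t+1)) + cInd (v.1+1, v.2) (F t) (F (t+1))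
      = (if (F t).1 = v.1 ∧ (F t).2 < v.2 then (1:ZMod 2) else 0)
        + (if (F (t+1)).1 = v.1 ∧ (F (t+1)).2 < v.2 then (1:ZMod 2) else 0) := by
    intro t ht
    rw [Finset.mem_range] at ht
    have h1 := stepid_h v (F t) (F (t+1)) (hstep t ht)
    rw [if_neg (hkill t ht)] at h1
    -- from x + y + (s) = 0 deduce x + y = s  (char 2)
    have : ∀ x y s : ZMod 2, x + y + s = 0 → x + y = s := by decide
    exact this _ _ _ h1
  have hsum : Wray F T v + Wray F T (v.1+1, v.2)
      = ∑ t ∈ Finset.range T, ((if (F t).1 = v.1 ∧ (F t).2 < v.2 then (1:ZMod 2) else 0)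
        + (if (F (t+1)).1 = v.1 ∧ (F (t+1)).2 < v.2 then (1:ZMod 2) else 0)) := by
    rw [Wray, Wray, ← Finset.sum_add_distrib]
    exact Finset.sum_congr rfl key
  rw [hsum, DaC.tele_sum F T (fun w => if w.1 = v.1 ∧ w.2 < v.2 then (1:ZMod 2) else 0)]
  rw [if_neg (by omega : ¬((F 0).1 = v.1 ∧ (F 0).2 < v.2))]
  by_cases h : (F T).1 = v.1
  · rw [if_pos ⟨h, hT2⟩, if_pos h]; decide
  · rw [if_neg (by tauto), if_neg h]; decide

/-- Vertical move lemma. -/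
lemma wray_vmove (v : V)
    (hkill : ∀ t < T, ¬((F t = (v.1-1, v.2) ∧ F (t+1) = (v.1, v.2)) ∨
        (F t = (v.1, v.2) ∧ F (t+1) = (v.1-1, v.2)))) :
    Wray F T (v.1, v.2+1) = Wray F T v := by
  classical
  have key : ∀ t ∈ Finset.range T,
      cInd (v.1, v.2+1) (F t) (F (t+1)) = cInd v (F t) (F (t+1)) := by
    intro t ht
    rw [Finset.mem_range] at ht
    have h1 := stepid_v v (F t) (F (t+1)) (hstep t ht)
    rw [if_neg (hkill t ht)] at h1
    have : ∀ x y : ZMod 2, x + y = 0 → x = y := by decide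
    exact this _ _ h1
  exact Finset.sum_congr rfl key

end Moves

/-- Wray vanishes left of all path columns / right of all path columns. -/
lemma wray_zero_left (F : ℕ → V) (T : ℕ) (v : V) (h : ∀ t ≤ T, v.1 ≤ (F t).1) :
    Wray F T v = 0 := by
  apply Finset.sum_eq_zero
  intro t ht
  rw [Finset.mem_range] at ht
  have h1 := h t (by omega); have h2 := h (t+1) (by omega)
  rw [cInd, if_neg (by omega)]

lemma wray_zero_right (F : ℕ → V) (T : ℕ) (v : V) (h : ∀ t ≤ T, (F t).1 < v.1) :
    Wray F T v = 0 := by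
  apply Finset.sum_eq_zero
  intro t ht
  rw [Finset.mem_range] at ht
  have h1 := h t (by omega); have h2 := h (t+1) (by omega)
  rw [cInd, if_neg (by omega)]

section Excl

/-- helpers over ZMod 2 -/
lemma zstep (A B : ZMod 2) (x1 c : ℤ) (h : A + B = if x1 = c then 1 else 0) :
    A + (if x1 < c then 1 else 0) = B + (if x1 < c + 1 then 1 else 0) := by
  have k1 : ∀ A B : ZMod 2, A + B = 1 → A + 0 = B + 1 := by decide
  have k2 : ∀ A B J : ZMod 2, A + B = 0 → A + J = B + J := by decide
  by_cases h1 : x1 = c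
  · rw [if_pos h1] at h
    rw [if_neg (by omega), if_pos (by omega)]
    exact k1 _ _ h
  · rw [if_neg h1] at h
    by_cases h2 : x1 < c
    · rw [if_pos h2, if_pos (by omega)]
      exact k2 _ _ _ h
    · rw [if_neg h2, if_neg (by omega)]
      exact k2 _ _ _ h

lemma hkill_of {F : ℕ → V} {T : ℕ} {p q : V}
    (h : (∀ t ≤ T, F t ≠ p) ∨ (∀ t ≤ T, F t ≠ q)) :
    ∀ t < T, ¬((F t = p ∧ F (t+1) = q) ∨ (F t = q ∧ F (t+1) = p)) := by
  rcases h with h | h <;> intro t ht <;>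
    [ (rintro (⟨h1, h2⟩ | ⟨h1, h2⟩);
        exacts [h t (by omega) h1, h (t+1) (by omega) h2]);
      (rintro (⟨h1, h2⟩ | ⟨h1, h2⟩);
        exacts [h (t+1) (by omega) h2, h t (by omega) h1])]

variable (F : ℕ → V) (T : ℕ)

def Phi (v : V) : ZMod 2 := Wray F T v + (if (F T).1 < v.1 then 1 else 0)

/-- The key invariance of `Phi` along a white `*`-step avoiding the black path. -/
lemma phi_step (m : ℤ)
    (hstep : ∀ t < T, ((F t).1 - (F (t+1)).1)^2 + ((F t).2 - (F (t+1)).2)^2 = 1)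
    (h02 : (F 0).2 = m + 1) (hT2 : (F T).2 = -1)
    (u w : V) (hadj : StarAdj u w)
    (hu : 0 ≤ u.2 ∧ u.2 ≤ m) (hw : 0 ≤ w.2 ∧ w.2 ≤ m)
    (hnu : ∀ t ≤ T, F t ≠ u) (hnw : ∀ t ≤ T, F t ≠ w) :
    Phi F T u = Phi F T w := by
  obtain ⟨hb1, hb2, hb3, hb4, hne⟩ := starAdj_cases hadj
  obtain ⟨ux, uy⟩ := u
  obtain ⟨wx, wy⟩ := w
  simp only [Phi] at *
  have hdx : wx - ux = -1 ∨ wx - ux = 0 ∨ wx - ux = 1 := by omega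
  have hdy : wy - uy = -1 ∨ wy - uy = 0 ∨ wy - uy = 1 := by omega
  have hne' : ¬(wx = ux ∧ wy = uy) := by
    intro ⟨h1, h2⟩; exact hne (by simp [Prod.ext_iff]; omega)
  -- hmove instantiations
  have HM : ∀ x y : ℤ, 0 ≤ y → y ≤ m + 1 →
      (∀ t < T, ¬((F t = (x, y-1) ∧ F (t+1) = (x, y)) ∨ (F t = (x, y) ∧ F (t+1) = (x, y-1)))) →
      Wray F T (x, y) + Wray F T (x+1, y) = if (F T).1 = x then 1 else 0 := by
    intro x y hy1 hy2 hk
    exact wray_hmove F T hstep (x, y) hy1 (by simp; omega) (by simp; omega) hk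
  have HV : ∀ x y : ℤ,
      (∀ t < T, ¬((F t = (x-1, y) ∧ F (t+1) = (x, y)) ∨ (F t = (x, y) ∧ F (t+1) = (x-1, y)))) →
      Wray F T (x, y+1) = Wray F T (x, y) := by
    intro x y hk
    exact wray_vmove F T hstep (x, y) hk
  rcases hdx with hdx | hdx | hdx <;> rcases hdy with hdy | hdy | hdy
  -- (-1,-1)
  · have e1 : wx = ux - 1 := by omega
    have e2 : wy = uy - 1 := by omega
    subst e1; subst e2
    have hv := HV (ux-1) (uy-1)
      (hkill_of (Or.inr (by intro t ht; have := hnw t ht; simpa using this)))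
    have h3 : uy - 1 + 1 = uy := by omega
    rw [h3] at hv
    have hm := HM (ux-1) uy (by omega) (by omega)
      (hkill_of (Or.inl (by intro t ht; have := hnw t ht; simpa using this)))
    rw [hv] at hm
    have := zstep _ _ (F T).1 (ux - 1) hm
    have h2 : ux - 1 + 1 = ux := by omega
    rw [h2] at this
    exact this.symm
  -- (-1,0)
  · have e1 : wx = ux - 1 := by omega
    have e2 : uy = wy := by omega
    subst e1; subst e2
    have hm := HM (ux-1) uy (by omega) (by omega)
      (hkill_of (Or.inr (by intro t ht; have := hnw t ht; simpa using this)))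
    have := zstep _ _ (F T).1 (ux - 1) hm
    have h2 : ux - 1 + 1 = ux := by omega
    rw [h2] at this
    exact this.symm
  -- (-1,1)
  · have e1 : wx = ux - 1 := by omega
    have e2 : wy = uy + 1 := by omega
    subst e1; subst e2
    have hv := HV ux uy
      (hkill_of (Or.inr (by intro t ht; have := hnu t ht; simpa using this)))
    have hm := HM (ux-1) (uy+1) (by omega) (by omega)
      (hkill_of (Or.inr (by intro t ht; have := hnw t ht; simpa using this)))
    have h2 : ux - 1 + 1 = ux := by omega
    rw [h2] at hm
    rw [hv] at hm
    have := zstep _ _ (F T).1 (ux - 1) hm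
    rw [h2] at this
    exact this.symm
  -- (0,-1)
  · have e1 : ux = wx := by omega
    have e2 : wy = uy - 1 := by omega
    subst e1; subst e2
    have hv := HV ux (uy-1)
      (hkill_of (Or.inr (by intro t ht; have := hnw t ht; simpa using this)))
    have : uy - 1 + 1 = uy := by omega
    rw [this] at hv
    rw [hv]
  -- (0,0) impossible
  · exact absurd ⟨by omega, by omega⟩ hne'
  -- (0,1)
  · have e1 : ux = wx := by omega
    have e2 : wy = uy + 1 := by omega
    subst e1; subst e2
    have hv := HV ux uy
      (hkill_of (Or.inr (by intro t ht; have := hnu t ht; simpa using this)))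
    rw [hv]
  -- (1,-1)
  · have e1 : wx = ux + 1 := by omega
    have e2 : wy = uy - 1 := by omega
    subst e1; subst e2
    have hm := HM ux uy (by omega) (by omega)
      (hkill_of (Or.inr (by intro t ht; have := hnu t ht; simpa using this)))
    have hv := HV (ux+1) (uy-1)
      (hkill_of (Or.inr (by intro t ht; have := hnw t ht; simpa using this)))
    have h3 : uy - 1 + 1 = uy := by omega
    rw [h3] at hv
    rw [hv] at hm
    exact zstep _ _ (F T).1 ux hm
  -- (1,0)
  · have e1 : wx = ux + 1 := by omega
    have e2 : uy = wy := by omega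
    subst e1; subst e2
    have hm := HM ux uy (by omega) (by omega)
      (hkill_of (Or.inr (by intro t ht; have := hnu t ht; simpa using this)))
    exact zstep _ _ (F T).1 ux hm
  -- (1,1)
  · have e1 : wx = ux + 1 := by omega
    have e2 : wy = uy + 1 := by omega
    subst e1; subst e2
    have hm := HM ux uy (by omega) (by omega)
      (hkill_of (Or.inr (by intro t ht; have := hnu t ht; simpa using this)))
    have hv := HV (ux+1) uy
      (hkill_of (Or.inl (by intro t ht; have := hnu t ht; simpa using this)))
    rw [← hv] at hm
    exact zstep _ _ (F T).1 ux hm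

end Excl
lemma no_both (n m : ℕ) (ξ : ColourCfg)
    (hb : ξ ∈ VertBC SqAdj n m) (hw : ξ ∈ HorizWStarC n m) : False := by
  classical
  obtain ⟨k, f, hfmem, hfadj, hftop, hfbot⟩ := hb
  obtain ⟨l, g, hgmem, hgadj, hgleft, hgright⟩ := hw
  set M : ℤ := (m : ℤ) with hM
  set N : ℤ := (n : ℤ) with hN
  set x0 : ℤ := (f 0).1 with hx0
  set x1 : ℤ := (f (Fin.last k)).1 with hx1
  -- the extended black path
  set F : ℕ → V := fun t =>
    if h : 1 ≤ t ∧ t ≤ k + 1 then f ⟨t - 1, by omega⟩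
    else if t = 0 then (x0, M + 1) else (x1, -1) with hF
  set T : ℕ := k + 2 with hT
  have hF0 : F 0 = (x0, M + 1) := by simp [hF]
  have hFT : F T = (x1, -1) := by simp [hF, hT]
  have hFmid : ∀ t (h1 : 1 ≤ t) (h2 : t ≤ k + 1), F t = f ⟨t - 1, by omega⟩ := by
    intro t h1 h2; simp [hF, h1, h2]
  have hf0' : F 1 = f 0 := by
    rw [hFmid 1 le_rfl (by omega)]; congr 1
  have hfk' : F (k+1) = f (Fin.last k) := by
    rw [hFmid (k+1) (by omega) le_rfl]; congr 1
  have htop := hftop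
  have hbot := hfbot
  obtain ⟨⟨hf0r1, hf0r2, hf0r3, hf0r4⟩, hf0y⟩ := htop
  obtain ⟨⟨hfkr1, hfkr2, hfkr3, hfkr4⟩, hfky⟩ := hbot
  -- steps of F are axis unit steps
  have hstep : ∀ t < T, ((F t).1 - (F (t+1)).1)^2 + ((F t).2 - (F (t+1)).2)^2 = 1 := by
    intro t ht
    rcases Nat.eq_or_lt_of_le (Nat.zero_le t) with h0 | h0
    · -- t = 0
      rw [← h0, hF0, hf0']
      simp only []
      rw [hx0, hf0y]
      ring
    · by_cases hk1 : t = k + 1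
      · subst hk1
        rw [hfk', show k + 1 + 1 = T from rfl, hFT]
        simp only []
        rw [hx1, hfky]
        ring
      · have h1 : 1 ≤ t := h0
        have h2 : t ≤ k := by omega
        rw [hFmid t h1 (by omega), hFmid (t+1) (by omega) (by omega)]
        have := hfadj ⟨t - 1, by omega⟩
        have e1 : (Fin.castSucc ⟨t - 1, by omega⟩ : Fin (k+1)) = ⟨t - 1, by omega⟩ := rfl
        have e2 : (Fin.succ ⟨t - 1, by omega⟩ : Fin (k+1)) = ⟨t + 1 - 1, by omega⟩ := by
          apply Fin.ext; simp; omega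
        rw [e1, e2] at this
        exact this
  -- x-range of F
  have hxr : ∀ t ≤ T, 0 ≤ (F t).1 ∧ (F t).1 ≤ N := by
    intro t ht
    by_cases h1 : 1 ≤ t ∧ t ≤ k + 1
    · rw [hFmid t h1.1 h1.2]
      have := (hfmem ⟨t - 1, by omega⟩).1
      exact ⟨this.1, this.2.1⟩
    · rcases Nat.eq_zero_or_pos t with h0 | h0
      · rw [h0, hF0]; exact ⟨hf0r1, hf0r2⟩
      · have : t = k + 2 := by omega
        rw [this, show k + 2 = T from rfl, hFT]
        exact ⟨hfkr1, hfkr2⟩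
  -- F avoids white vertices of the rectangle
  have havoid : ∀ v : V, ξ v = false → 0 ≤ v.2 → v.2 ≤ M → ∀ t ≤ T, F t ≠ v := by
    intro v hv hv1 hv2 t ht
    by_cases h1 : 1 ≤ t ∧ t ≤ k + 1
    · rw [hFmid t h1.1 h1.2]
      intro he
      have := (hfmem ⟨t - 1, by omega⟩).2
      rw [he, hv] at this; exact Bool.false_ne_true this
    · rcases Nat.eq_zero_or_pos t with h0 | h0
      · rw [h0, hF0]; intro he
        have := congrArg Prod.snd he; simp at this; omega
      · have : t = k + 2 := by omega
        rw [this, show k + 2 = T from rfl, hFT]; intro he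
        have := congrArg Prod.snd he; simp at this; omega
  have hx1b : 0 ≤ x1 ∧ x1 ≤ N := ⟨hfkr1, hfkr2⟩
  have hFT1 : (F T).1 = x1 := by rw [hFT]
  -- Phi is 0 at the left end of g
  have hPhig : ∀ j : ℕ, (hj : j ≤ l) → Phi F T (g ⟨j, by omega⟩) = Phi F T (g 0) := by
    intro j
    induction j with
    | zero => intro _; congr 1
    | succ j ih =>
      intro hj
      have hj' : j ≤ l := by omega
      rw [← ih hj']
      have hadj := hgadj ⟨j, by omega⟩
      have e1 : (Fin.castSucc ⟨j, by omega⟩ : Fin (l+1)) = ⟨j, by omega⟩ := rfl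
      have e2 : (Fin.succ ⟨j, by omega⟩ : Fin (l+1)) = ⟨j+1, by omega⟩ := rfl
      rw [e1, e2] at hadj
      have hu := hgmem ⟨j, by omega⟩
      have hw' := hgmem ⟨j+1, by omega⟩
      exact (phi_step F T M hstep (by rw [hF0]) (by rw [hFT])
        (g ⟨j, by omega⟩) (g ⟨j+1, by omega⟩) hadj
        ⟨hu.1.2.2.1, hu.1.2.2.2⟩ ⟨hw'.1.2.2.1, hw'.1.2.2.2⟩
        (havoid _ hu.2 hu.1.2.2.1 hu.1.2.2.2)
        (havoid _ hw'.2 hw'.1.2.2.1 hw'.1.2.2.2)).symm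
  have hchain : Phi F T (g (Fin.last l)) = Phi F T (g 0) := by
    have := hPhig l le_rfl
    have e : (⟨l, by omega⟩ : Fin (l+1)) = Fin.last l := rfl
    rw [e] at this; exact this
  -- left end value
  have hleft : Phi F T (g 0) = 0 := by
    have hg0x : (g 0).1 = 0 := hgleft.2
    have hz : Wray F T (g 0) = 0 := by
      apply wray_zero_left
      intro t ht
      rw [hg0x]
      exact (hxr t ht).1
    rw [Phi, hz, hg0x, if_neg (by omega)]
    rfl
  -- right end value
  have hright : Phi F T (g (Fin.last l)) = 1 := by
    have hglx : (g (Fin.last l)).1 = N := hgright.2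
    have hgl := hgmem (Fin.last l)
    have hgly1 : 0 ≤ (g (Fin.last l)).2 := hgl.1.2.2.1
    have hgly2 : (g (Fin.last l)).2 ≤ M := hgl.1.2.2.2
    -- hmove at g(last)
    have hm := wray_hmove F T hstep ((g (Fin.last l)).1, (g (Fin.last l)).2)
      (by simpa using hgly1) (by rw [hF0]; simpa using by omega)
      (by rw [hFT]; simpa using by omega)
      (hkill_of (Or.inr (by
        intro t ht
        have := havoid _ hgl.2 hgly1 hgly2 t ht
        simpa using this)))
    have hzero : Wray F T ((g (Fin.last l)).1 + 1, (g (Fin.last l)).2) = 0 := by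
      apply wray_zero_right
      intro t ht
      have := (hxr t ht).2
      simp only []
      omega
    rw [hzero, add_zero] at hm
    have heq : ((g (Fin.last l)).1, (g (Fin.last l)).2) = g (Fin.last l) := rfl
    rw [heq] at hm
    rw [Phi, hm, hFT1, hglx]
    by_cases hc : x1 = N
    · rw [if_pos hc, if_neg (by omega)]; rfl
    · rw [if_neg hc, if_pos (by omega)]; rfl
  rw [hchain, hleft] at hright
  exact absurd hright (by decide)

section Walk

inductive WDir : Type | U | R | D | L
deriving DecidableEq

instance : Fintype WDir :=
  ⟨{WDir.U, WDir.R, WDir.D, WDir.L}, fun x => by cases x <;> simp⟩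

abbrev WSt : Type := ℤ × ℤ × WDir

variable (χ : ℤ × ℤ → Bool)

/-- The white vertex on the left of the crossed edge. -/
def wpt : WSt → ℤ × ℤ
| (a, b, .U) => (a, b)
| (a, b, .R) => (a, b+1)
| (a, b, .D) => (a+1, b+1)
| (a, b, .L) => (a+1, b)

/-- The black vertex on the right of the crossed edge. -/
def bpt : WSt → ℤ × ℤ
| (a, b, .U) => (a+1, b)
| (a, b, .R) => (a, b)
| (a, b, .D) => (a, b+1)
| (a, b, .L) => (a+1, b+1)

def WValid (s : WSt) : Prop := χ (wpt s) = false ∧ χ (bpt s) = true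

/-- One step of the interface walk (white kept on the left). -/
def wstep : WSt → WSt
| (a, b, .U) => if χ (a+1, b+1) = false then (a+1, b, .R)
    else if χ (a, b+1) = false then (a, b+1, .U) else (a-1, b, .L)
| (a, b, .R) => if χ (a+1, b) = false then (a, b-1, .D)
    else if χ (a+1, b+1) = false then (a+1, b, .R) else (a, b+1, .U)
| (a, b, .D) => if χ (a, b) = false then (a-1, b, .L)
    else if χ (a+1, b) = false then (a, b-1, .D) else (a+1, b, .R)
| (a, b, .L) => if χ (a, b+1) = false then (a, b+1, .U)
    else if χ (a, b) = false then (a-1, b, .L) else (a, b-1, .D)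

/-- The reverse step. -/
def wbstep : WSt → WSt
| (a, b, .U) => if χ (a+1, b-1) = false then (a, b-1, .L)
    else if χ (a, b-1) = false then (a, b-1, .U) else (a, b-1, .R)
| (a, b, .R) => if χ (a-1, b) = false then (a-1, b, .U)
    else if χ (a-1, b+1) = false then (a-1, b, .R) else (a-1, b, .D)
| (a, b, .D) => if χ (a, b+2) = false then (a, b+1, .R)
    else if χ (a+1, b+2) = false then (a, b+1, .D) else (a, b+1, .L)
| (a, b, .L) => if χ (a+2, b+1) = false then (a+1, b, .D)
    else if χ (a+2, b) = false then (a+1, b, .L) else (a+1, b, .U)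

lemma wvalid_wstep {s : WSt} (h : WValid χ s) : WValid χ (wstep χ s) := by
  obtain ⟨a, b, d⟩ := s
  obtain ⟨hw, hb⟩ := h
  cases d <;> simp only [wpt, bpt] at hw hb <;>
    simp only [wstep] <;> split_ifs with h1 h2 <;>
    refine ⟨?_, ?_⟩ <;> simp only [wpt, bpt] <;>
    first
      | assumption
      | (simp only [show ∀ x : ℤ, x - 1 + 1 = x from fun x => by ring,
            Bool.not_eq_false] at * ; assumption)

lemma wbstep_wstep {s : WSt} (h : WValid χ s) : wbstep χ (wstep χ s) = s := by
  obtain ⟨a, b, d⟩ := s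
  obtain ⟨hw, hb⟩ := h
  have e1 : ∀ x : ℤ, x - 1 + 1 = x := fun x => by ring
  have e2 : ∀ x : ℤ, x + 1 - 1 = x := fun x => by ring
  have e3 : ∀ x : ℤ, x - 1 + 2 = x + 1 := fun x => by ring
  have e4 : ∀ x : ℤ, x + 1 + 1 = x + 2 := fun x => by ring
  cases d <;> simp only [wpt, bpt] at hw hb <;>
    simp only [wstep] <;> split_ifs with h1 h2 <;>
    simp only [wbstep, e1, e2, e3, e4] <;>
    simp_all <;> omega

end Walk

section Aug

variable (ξ : ColourCfg) (n m : ℕ)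

/-- The augmented colouring: white strips on the sides, black strips on top/bottom. -/
def augC : ℤ × ℤ → Bool := fun v =>
  if 0 ≤ v.1 ∧ v.1 ≤ (n:ℤ) ∧ 0 ≤ v.2 ∧ v.2 ≤ (m:ℤ) then ξ v
  else decide (0 ≤ v.1 ∧ v.1 ≤ (n:ℤ))

lemma augC_black_x {v : ℤ × ℤ} (h : augC ξ n m v = true) : 0 ≤ v.1 ∧ v.1 ≤ (n:ℤ) := by
  by_cases hin : 0 ≤ v.1 ∧ v.1 ≤ (n:ℤ) ∧ 0 ≤ v.2 ∧ v.2 ≤ (m:ℤ)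
  · exact ⟨hin.1, hin.2.1⟩
  · rw [augC, if_neg hin] at h; simpa using h

lemma augC_out {v : ℤ × ℤ} (h : v.2 < 0 ∨ (m:ℤ) < v.2) :
    augC ξ n m v = decide (0 ≤ v.1 ∧ v.1 ≤ (n:ℤ)) := by
  rw [augC, if_neg (by omega)]

lemma augC_in {v : ℤ × ℤ} (h1 : 0 ≤ v.1) (h2 : v.1 ≤ (n:ℤ)) (h3 : 0 ≤ v.2)
    (h4 : v.2 ≤ (m:ℤ)) : augC ξ n m v = ξ v := by
  rw [augC, if_pos ⟨h1, h2, h3, h4⟩]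

lemma augC_white_in {v : ℤ × ℤ} (h : augC ξ n m v = false) (h1 : 0 ≤ v.1)
    (h2 : v.1 ≤ (n:ℤ)) : 0 ≤ v.2 ∧ v.2 ≤ (m:ℤ) ∧ ξ v = false := by
  by_cases hin : 0 ≤ v.1 ∧ v.1 ≤ (n:ℤ) ∧ 0 ≤ v.2 ∧ v.2 ≤ (m:ℤ)
  · rw [augC, if_pos hin] at h; exact ⟨hin.2.2.1, hin.2.2.2, h⟩
  · rw [augC, if_neg hin] at h; simp at h; omega

end Aug

section Chains

variable (χ : ℤ × ℤ → Bool)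

/-- black connectivity relation -/
def RBrel (u v : ℤ × ℤ) : Prop := SqAdj u v ∧ χ u = true ∧ χ v = true
/-- white `*`-connectivity relation -/
def RWrel (u v : ℤ × ℤ) : Prop := StarAdj u v ∧ χ u = false ∧ χ v = false

lemma sqAdj_E (x y : ℤ) : SqAdj (x, y) (x+1, y) := by unfold SqAdj; ring
lemma sqAdj_W (x y : ℤ) : SqAdj (x+1, y) (x, y) := by unfold SqAdj; ring
lemma sqAdj_N (x y : ℤ) : SqAdj (x, y) (x, y+1) := by unfold SqAdj; ring
lemma sqAdj_S (x y : ℤ) : SqAdj (x, y+1) (x, y) := by unfold SqAdj; ring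

lemma starAdj_NE (x y : ℤ) : StarAdj (x, y) (x+1, y+1) := Or.inr (by ring)
lemma starAdj_SW (x y : ℤ) : StarAdj (x+1, y+1) (x, y) := Or.inr (by ring)
lemma starAdj_NW (x y : ℤ) : StarAdj (x+1, y) (x, y+1) := Or.inr (by ring)
lemma starAdj_SE (x y : ℤ) : StarAdj (x, y+1) (x+1, y) := Or.inr (by ring)

lemma chain_white {s : WSt} (h : WValid χ s) :
    Relation.ReflTransGen (RWrel χ) (wpt s) (wpt (wstep χ s)) := by
  have h' := wvalid_wstep χ h
  obtain ⟨a, b, d⟩ := s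
  obtain ⟨hw, hb⟩ := h
  cases d <;> simp only [wpt, bpt] at hw hb <;>
    simp only [wstep] at h' ⊢ <;> split_ifs at h' ⊢ with h1 h2 <;>
    simp only [wpt, bpt, WValid, Bool.not_eq_false,
      show ∀ x : ℤ, x - 1 + 1 = x from fun x => by ring] at *
  · exact Relation.ReflTransGen.single ⟨starAdj_NE a b, hw, h'.1⟩
  · exact Relation.ReflTransGen.single ⟨Or.inl (sqAdj_N a b), hw, h'.1⟩
  · exact Relation.ReflTransGen.refl
  · exact Relation.ReflTransGen.single ⟨starAdj_SE a b, hw, h'.1⟩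
  · exact Relation.ReflTransGen.single ⟨Or.inl (sqAdj_E a (b+1)), hw, h'.1⟩
  · exact Relation.ReflTransGen.refl
  · exact Relation.ReflTransGen.single ⟨starAdj_SW a b, hw, h'.1⟩
  · exact Relation.ReflTransGen.single ⟨Or.inl (sqAdj_S (a+1) b), hw, h'.1⟩
  · exact Relation.ReflTransGen.refl
  · exact Relation.ReflTransGen.single ⟨starAdj_NW a b, hw, h'.1⟩
  · exact Relation.ReflTransGen.single ⟨Or.inl (sqAdj_W a b), hw, h'.1⟩
  · exact Relation.ReflTransGen.refl

lemma chain_black {s : WSt} (h : WValid χ s) :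
    Relation.ReflTransGen (RBrel χ) (bpt s) (bpt (wstep χ s)) := by
  have h' := wvalid_wstep χ h
  obtain ⟨a, b, d⟩ := s
  obtain ⟨hw, hb⟩ := h
  cases d <;> simp only [wpt, bpt] at hw hb <;>
    simp only [wstep] at h' ⊢ <;> split_ifs at h' ⊢ with h1 h2 <;>
    simp only [wpt, bpt, WValid, Bool.not_eq_false,
      show ∀ x : ℤ, x - 1 + 1 = x from fun x => by ring] at *
  · exact Relation.ReflTransGen.refl
  · exact Relation.ReflTransGen.single ⟨sqAdj_N (a+1) b, hb, h'.2⟩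
  · exact Relation.ReflTransGen.head ⟨sqAdj_N (a+1) b, hb, h1⟩
      (Relation.ReflTransGen.single ⟨sqAdj_W a (b+1), h1, h'.2⟩)
  · exact Relation.ReflTransGen.refl
  · exact Relation.ReflTransGen.single ⟨sqAdj_E a b, hb, h'.2⟩
  · exact Relation.ReflTransGen.head ⟨sqAdj_E a b, hb, h1⟩
      (Relation.ReflTransGen.single ⟨sqAdj_N (a+1) b, h1, h'.2⟩)
  · exact Relation.ReflTransGen.refl
  · exact Relation.ReflTransGen.single ⟨sqAdj_S a b, hb, h'.2⟩
  · exact Relation.ReflTransGen.head ⟨sqAdj_S a b, hb, h1⟩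
      (Relation.ReflTransGen.single ⟨sqAdj_E a b, h1, h'.2⟩)
  · exact Relation.ReflTransGen.refl
  · exact Relation.ReflTransGen.single ⟨sqAdj_W a (b+1), hb, h'.2⟩
  · exact Relation.ReflTransGen.head ⟨sqAdj_W a (b+1), hb, h1⟩
      (Relation.ReflTransGen.single ⟨sqAdj_S a b, h1, h'.2⟩)

end Chains

lemma sqAdj_symm {u v : V} (h : SqAdj u v) : SqAdj v u := by
  unfold SqAdj at *; linear_combination h

section Term

variable (ξ : ColourCfg) (n m : ℕ)

def WS0 : WSt := (-1, -1, WDir.U)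

def wseq : ℕ → WSt := fun j => (wstep (augC ξ n m))^[j] WS0

lemma augC_strip_black {x y : ℤ} (hx1 : 0 ≤ x) (hx2 : x ≤ (n:ℤ)) (hy : y < 0 ∨ (m:ℤ) < y) :
    augC ξ n m (x, y) = true := by
  rw [augC_out ξ n m (v := (x,y)) (by simpa using hy)]
  simp only [decide_eq_true_eq]
  exact ⟨hx1, hx2⟩

lemma augC_left_white {x y : ℤ} (hx : x < 0) : augC ξ n m (x, y) = false := by
  rw [augC, if_neg (by simp; omega)]
  simp; omega

lemma WS0_valid : WValid (augC ξ n m) WS0 := by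
  constructor
  · exact augC_left_white ξ n m (by norm_num)
  · exact augC_strip_black ξ n m le_rfl (by positivity) (by norm_num)

lemma wseq_succ (j : ℕ) : wseq ξ n m (j+1) = wstep (augC ξ n m) (wseq ξ n m j) :=
  Function.iterate_succ_apply' _ _ _

lemma wseq_valid (j : ℕ) : WValid (augC ξ n m) (wseq ξ n m j) := by
  induction j with
  | zero => exact WS0_valid ξ n m
  | succ j ih => rw [wseq_succ]; exact wvalid_wstep _ ih

lemma valid_a {s : WSt} (h : WValid (augC ξ n m) s) : -1 ≤ s.1 ∧ s.1 ≤ (n:ℤ) := by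
  obtain ⟨a, b, d⟩ := s
  have hb := h.2
  cases d <;> simp only [bpt] at hb <;>
    have := augC_black_x ξ n m hb <;> simp at this ⊢ <;> omega

lemma wstep_b (χ : ℤ × ℤ → Bool) (s : WSt) :
    ((wstep χ s).2.1 = s.2.1 + 1 ∧ (wstep χ s).2.2 = WDir.U) ∨
    ((wstep χ s).2.1 = s.2.1 - 1 ∧ (wstep χ s).2.2 = WDir.D) ∨
    ((wstep χ s).2.1 = s.2.1) := by
  obtain ⟨a, b, d⟩ := s
  cases d <;> simp only [wstep] <;> split_ifs <;> simp

lemma wseq_back : ∀ (d j : ℕ), wseq ξ n m j = wseq ξ n m (j + d) →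
    wseq ξ n m 0 = wseq ξ n m d := by
  intro d j
  induction j with
  | zero => intro h; simpa using h
  | succ j ih =>
    intro h
    apply ih
    have h1 := congrArg (wbstep (augC ξ n m)) h
    rw [wseq_succ, show j + 1 + d = (j + d) + 1 from by omega, wseq_succ] at h1
    rw [wbstep_wstep _ (wseq_valid ξ n m j), wbstep_wstep _ (wseq_valid ξ n m (j+d))] at h1
    exact h1

lemma wbstep_WS0 : wbstep (augC ξ n m) WS0 = (-1, -2, WDir.U) := by
  show wbstep (augC ξ n m) (-1, -1, WDir.U) = _
  rw [wbstep]
  rw [if_neg, if_pos]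
  · norm_num
  · exact augC_left_white ξ n m (by norm_num)
  · rw [show (-1 + 1 : ℤ) = 0 from by norm_num,
      augC_strip_black ξ n m le_rfl (by positivity) (by norm_num)]
    simp

lemma wbstep_next : wbstep (augC ξ n m) (-1, -2, WDir.U) = (-1, -3, WDir.U) := by
  rw [wbstep]
  rw [if_neg, if_pos]
  · norm_num
  · exact augC_left_white ξ n m (by norm_num)
  · rw [show (-1 + 1 : ℤ) = 0 from by norm_num,
      augC_strip_black ξ n m le_rfl (by positivity) (by norm_num)]
    simp

lemma escape : ∃ j, ¬(-2 ≤ (wseq ξ n m j).2.1 ∧ (wseq ξ n m j).2.1 ≤ (m:ℤ)+2) := by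
  by_contra hall
  push_neg at hall
  have hall' : ∀ j, -2 ≤ (wseq ξ n m j).2.1 ∧ (wseq ξ n m j).2.1 ≤ (m:ℤ)+2 := fun j => hall j
  clear hall
  set Sfin : Set WSt :=
    (Set.Icc (-1:ℤ) (n:ℤ)) ×ˢ ((Set.Icc (-2:ℤ) ((m:ℤ)+2)) ×ˢ (Set.univ : Set WDir))
    with hSfin
  have hfin : Sfin.Finite :=
    (Set.finite_Icc _ _).prod ((Set.finite_Icc _ _).prod Set.finite_univ)
  have hmem : ∀ j, wseq ξ n m j ∈ Sfin := by
    intro j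
    refine ⟨?_, ?_, trivial⟩
    · have := valid_a ξ n m (wseq_valid ξ n m j)
      exact Set.mem_Icc.mpr this
    · exact Set.mem_Icc.mpr (hall' j)
  haveI := hfin.to_subtype
  obtain ⟨j, j', hne, heq⟩ :=
    Finite.exists_ne_map_eq_of_infinite (fun j : ℕ => (⟨wseq ξ n m j, hmem j⟩ : Sfin))
  have heq' : wseq ξ n m j = wseq ξ n m j' := congrArg Subtype.val heq
  have key : ∀ (a b : ℕ), a < b → wseq ξ n m a = wseq ξ n m b → False := by
    intro a b hlt heqab
    set d : ℕ := b - a with hd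
    have hd1 : 1 ≤ d := by omega
    have h0d : wseq ξ n m 0 = wseq ξ n m d := by
      apply wseq_back ξ n m d a
      rw [show a + d = b from by omega]
      exact heqab
    have hS0 : wseq ξ n m 0 = WS0 := rfl
    have h0d' : WS0 = wseq ξ n m d := by rw [← hS0]; exact h0d
    have hstep1 : wseq ξ n m d = wstep (augC ξ n m) (wseq ξ n m (d-1)) := by
      conv_lhs => rw [show d = (d-1) + 1 from by omega]
      rw [wseq_succ]
    have hprev : wseq ξ n m (d-1) = (-1, -2, WDir.U) := by
      have h2 := congrArg (wbstep (augC ξ n m)) h0d'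
      rw [hstep1, wbstep_wstep _ (wseq_valid ξ n m (d-1)), wbstep_WS0] at h2
      exact h2.symm
    have hd2 : 2 ≤ d := by
      rcases Nat.lt_or_ge d 2 with h | h
      · exfalso
        have he : d - 1 = 0 := by omega
        rw [he, hS0] at hprev
        have := congrArg (fun s : WSt => s.2.1) hprev
        simp [WS0] at this
      · exact h
    have hstep2 : wseq ξ n m (d-1) = wstep (augC ξ n m) (wseq ξ n m (d-2)) := by
      conv_lhs => rw [show d - 1 = (d-2) + 1 from by omega]
      rw [wseq_succ]
    have hprev2 : wseq ξ n m (d-2) = (-1, -3, WDir.U) := by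
      have h2 := congrArg (wbstep (augC ξ n m)) hprev
      rw [hstep2, wbstep_wstep _ (wseq_valid ξ n m (d-2)), wbstep_next] at h2
      exact h2
    have hcontr := (hall' (d-2)).1
    rw [hprev2] at hcontr
    norm_num at hcontr
  rcases lt_or_gt_of_ne hne with h | h
  · exact key _ _ h heq'
  · exact key _ _ h heq'.symm

lemma chain_black_upto (j : ℕ) :
    Relation.ReflTransGen (RBrel (augC ξ n m)) (bpt WS0) (bpt (wseq ξ n m j)) := by
  induction j with
  | zero => exact Relation.ReflTransGen.refl
  | succ j ih =>
    rw [wseq_succ]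
    exact ih.trans (chain_black _ (wseq_valid ξ n m j))

lemma chain_white_upto (j : ℕ) :
    Relation.ReflTransGen (RWrel (augC ξ n m)) (wpt WS0) (wpt (wseq ξ n m j)) := by
  induction j with
  | zero => exact Relation.ReflTransGen.refl
  | succ j ih =>
    rw [wseq_succ]
    exact ih.trans (chain_white _ (wseq_valid ξ n m j))

end Term

/-- Generic extraction of a clamped sub-path. -/
lemma extract {N : ℕ} {g : ℕ → V} {R : V → V → Prop} (hR : ∀ i < N, R (g i) (g (i+1)))
    {Q : V → Prop} (hQ : ∀ i ≤ N, Q (g i))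
    (π : V → ℤ) (hπ : ∀ u v, R u v → π v ≤ π u + 1 ∧ π u ≤ π v + 1)
    (c : ℤ) (hc : 0 ≤ c) (h0 : π (g 0) < 0) (hN : c < π (g N)) :
    ∃ (K : ℕ) (h : ℕ → V), (∀ t < K, R (h t) (h (t+1))) ∧ π (h 0) = 0 ∧ π (h K) = c ∧
      (∀ t ≤ K, 0 ≤ π (h t) ∧ π (h t) ≤ c) ∧ (∀ t ≤ K, Q (h t)) := by
  classical
  have hex : ∃ i, c < π (g i) := ⟨N, hN⟩
  set T := Nat.find hex with hTdef
  have hT : c < π (g T) := Nat.find_spec hex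
  have hTmin : ∀ i < T, ¬(c < π (g i)) := fun i hi => Nat.find_min hex hi
  have hTN : T ≤ N := Nat.find_min' hex hN
  have hT1 : 1 ≤ T := by
    rcases Nat.eq_zero_or_pos T with h | h
    · exfalso; rw [h] at hT; omega
    · exact h
  have hstepT : π (g T) ≤ π (g (T-1)) + 1 := by
    have := hπ _ _ (hR (T-1) (by omega))
    rw [show T - 1 + 1 = T from by omega] at this
    exact this.1
  have hTm1 : π (g (T-1)) = c := by
    have h1 := hTmin (T-1) (by omega)
    omega
  set j0 := Nat.findGreatest (fun j => π (g j) < 0) (T-1) with hj0def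
  have hj0spec : π (g j0) < 0 :=
    Nat.findGreatest_spec (P := fun j => π (g j) < 0) (m := 0) (n := T-1) (Nat.zero_le _) h0
  have hj0le : j0 ≤ T - 1 := Nat.findGreatest_le _
  have hj0gr : ∀ t, j0 < t → t ≤ T - 1 → ¬(π (g t) < 0) := by
    intro t h1 h2
    exact Nat.findGreatest_is_greatest h1 h2
  have hj0T : j0 + 1 ≤ T := by omega
  have hstepj0 : π (g (j0+1)) ≤ π (g j0) + 1 := (hπ _ _ (hR j0 (by omega))).1
  have hj0ltT : j0 + 1 < T := by
    rcases Nat.lt_or_ge (j0+1) T with h | h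
    · exact h
    · exfalso
      have he : j0 + 1 = T := by omega
      rw [he] at hstepj0
      omega
  have hj01 : π (g (j0+1)) = 0 := by
    have := hj0gr (j0+1) (by omega) (by omega)
    omega
  have hj0T' : j0 + 2 ≤ T := by omega
  refine ⟨T - 1 - (j0+1), fun t => g (j0 + 1 + t), ?_, ?_, ?_, ?_, ?_⟩
  · intro t ht
    exact hR (j0+1+t) (by omega)
  · simpa using hj01
  · show π (g (j0 + 1 + (T - 1 - (j0+1)))) = c
    rw [show j0 + 1 + (T - 1 - (j0+1)) = T - 1 from by omega]
    exact hTm1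
  · intro t ht
    show 0 ≤ π (g (j0+1+t)) ∧ π (g (j0+1+t)) ≤ c
    constructor
    · rcases Nat.eq_zero_or_pos t with h | h
      · rw [h, show j0 + 1 + 0 = j0 + 1 from by omega]
        omega
      · have := hj0gr (j0+1+t) (by omega) (by omega)
        omega
    · have := hTmin (j0+1+t) (by omega)
      omega
  · intro t ht
    exact hQ (j0+1+t) (by omega)
lemma augC_right_white (ξ : ColourCfg) (n m : ℕ) {x y : ℤ} (hx : (n:ℤ) < x) :
    augC ξ n m (x, y) = false := by
  rw [augC, if_neg (by simp; omega)]
  simp; omega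

lemma exists_crossing (n m : ℕ) (ξ : ColourCfg) :
    ξ ∈ VertBC SqAdj n m ∨ ξ ∈ HorizWStarC n m := by
  classical
  have hex := escape ξ n m
  set k0 := Nat.find hex with hk0
  have hk0spec := Nat.find_spec hex
  rw [← hk0] at hk0spec
  have hk0min : ∀ i < k0, (-2 ≤ (wseq ξ n m i).2.1 ∧ (wseq ξ n m i).2.1 ≤ (m:ℤ)+2) := by
    intro i hi
    have := Nat.find_min hex hi
    tauto
  have hk01 : 1 ≤ k0 := by
    rcases Nat.eq_zero_or_pos k0 with h | h
    · exfalso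
      rw [h] at hk0spec
      have he : (wseq ξ n m 0).2.1 = -1 := rfl
      omega
    · exact h
  have hprevb := hk0min (k0-1) (by omega)
  have hcurstep : wseq ξ n m k0 = wstep (augC ξ n m) (wseq ξ n m (k0-1)) := by
    conv_lhs => rw [show k0 = (k0-1) + 1 from by omega]
    rw [wseq_succ]
  have hshape := wstep_b (augC ξ n m) (wseq ξ n m (k0-1))
  rw [← hcurstep] at hshape
  have hvalid := wseq_valid ξ n m k0
  have hchainB := chain_black_upto ξ n m k0
  have hchainW := chain_white_upto ξ n m k0
  rcases hshape with ⟨hb, hd⟩ | ⟨hb, hd⟩ | hb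
  · -- top-left exit: black vertical crossing
    left
    have hbv : (wseq ξ n m k0).2.1 = (m:ℤ)+3 := by omega
    rcases hsc : wseq ξ n m k0 with ⟨a, b, d⟩
    rw [hsc] at hbv hd hvalid hchainB
    simp at hbv hd
    subst hbv
    subst hd
    obtain ⟨hw, hbk⟩ := hvalid
    simp only [wpt, bpt] at hw hbk
    have hax := augC_black_x ξ n m hbk
    simp at hax
    have ha : a = -1 := by
      by_contra hcon
      have h1 : 0 ≤ a ∧ a ≤ (n:ℤ) := by omega
      rw [augC_strip_black ξ n m h1.1 h1.2 (by right; omega)] at hw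
      simp at hw
    simp only [WS0, bpt] at hchainB
    rw [ha] at hchainB
    norm_num at hchainB
    obtain ⟨N, g, hg0, hgN, hgR⟩ := rtg_exists_fn hchainB
    have hQ : ∀ i ≤ N, augC ξ n m (g i) = true := by
      intro i hi
      rcases Nat.lt_or_ge i N with h | h
      · exact (hgR i h).2.1
      · have he : i = N := by omega
        rw [he, hgN]
        exact augC_strip_black ξ n m le_rfl (by positivity) (by right; omega)
    have hπ : ∀ u v : V, RBrel (augC ξ n m) u v →
        Prod.snd v ≤ Prod.snd u + 1 ∧ Prod.snd u ≤ Prod.snd v + 1 := by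
      intro u v hr
      have := sqAdj_cases hr.1
      omega
    obtain ⟨K, h, hhR, hh0, hhK, hbnd, hhQ⟩ := extract (Q := fun v => augC ξ n m v = true) hgR hQ Prod.snd hπ (m:ℤ)
      (by positivity) (by rw [hg0]; norm_num) (by rw [hgN]; simp)
    have hmemf : ∀ t, t ≤ K → h t ∈ Rect n m ∧ ξ (h t) = true := by
      intro t ht
      have hq := hhQ t ht
      have hx := augC_black_x ξ n m hq
      have hy := hbnd t ht
      have hin : h t ∈ Rect n m := ⟨hx.1, hx.2, hy.1, hy.2⟩
      refine ⟨hin, ?_⟩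
      rw [← augC_in ξ n m hx.1 hx.2 hy.1 hy.2]
      exact hq
    refine ⟨K, fun i : Fin (K+1) => h (K - i.val), ?_, ?_, ?_, ?_⟩
    · intro i
      exact hmemf (K - i.val) (by omega)
    · intro i
      have hst := hhR (K - i.val - 1) (by omega)
      rw [show K - i.val - 1 + 1 = K - i.val from by omega] at hst
      show SqAdj (h (K - i.val)) (h (K - (i.val + 1)))
      rw [show K - (i.val + 1) = K - i.val - 1 from by omega]
      exact sqAdj_symm hst.1
    · show h (K - (0 : Fin (K+1)).val) ∈ TopSide n m
      rw [show K - (0 : Fin (K+1)).val = K from by simp]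
      exact ⟨(hmemf K le_rfl).1, hhK⟩
    · show h (K - (Fin.last K).val) ∈ BotSide n m
      rw [show K - (Fin.last K).val = 0 from by simp]
      exact ⟨(hmemf 0 (by omega)).1, hh0⟩
  · -- bottom-right exit: white horizontal crossing
    right
    have hbv : (wseq ξ n m k0).2.1 = -3 := by omega
    rcases hsc : wseq ξ n m k0 with ⟨a, b, d⟩
    rw [hsc] at hbv hd hvalid hchainW
    simp at hbv hd
    subst hbv
    subst hd
    obtain ⟨hw, hbk⟩ := hvalid
    simp only [wpt, bpt] at hw hbk
    have hax := augC_black_x ξ n m hbk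
    simp at hax
    have ha : a = (n:ℤ) := by
      by_contra hcon
      have h1 : 0 ≤ a + 1 ∧ a + 1 ≤ (n:ℤ) := by omega
      rw [augC_strip_black ξ n m h1.1 h1.2 (by left; omega)] at hw
      simp at hw
    simp only [WS0, wpt] at hchainW
    rw [ha] at hchainW
    norm_num at hchainW
    obtain ⟨N, g, hg0, hgN, hgR⟩ := rtg_exists_fn hchainW
    have hQ : ∀ i ≤ N, augC ξ n m (g i) = false := by
      intro i hi
      rcases Nat.lt_or_ge i N with h | h
      · exact (hgR i h).2.1
      · have he : i = N := by omega
        rw [he, hgN]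
        exact augC_right_white ξ n m (by omega)
    have hπ : ∀ u v : V, RWrel (augC ξ n m) u v →
        Prod.fst v ≤ Prod.fst u + 1 ∧ Prod.fst u ≤ Prod.fst v + 1 := by
      intro u v hr
      have := starAdj_cases hr.1
      omega
    obtain ⟨K, h, hhR, hh0, hhK, hbnd, hhQ⟩ := extract (Q := fun v => augC ξ n m v = false) hgR hQ Prod.fst hπ (n:ℤ)
      (by positivity) (by rw [hg0]; norm_num) (by rw [hgN]; simp)
    have hmemf : ∀ t, t ≤ K → h t ∈ Rect n m ∧ ξ (h t) = false := by
      intro t ht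
      have hq := hhQ t ht
      have hx := hbnd t ht
      have hy := augC_white_in ξ n m hq hx.1 hx.2
      have hin : h t ∈ Rect n m := ⟨hx.1, hx.2, hy.1, hy.2.1⟩
      exact ⟨hin, hy.2.2⟩
    refine ⟨K, fun i : Fin (K+1) => h i.val, ?_, ?_, ?_, ?_⟩
    · intro i
      exact hmemf i.val (by omega)
    · intro i
      exact (hhR i.val i.isLt).1
    · exact ⟨(hmemf 0 (by omega)).1, hh0⟩
    · exact ⟨(hmemf K (by simp)).1, hhK⟩
  · exfalso
    omega

theorem vertB_xor_horizWStar' (n m : ℕ) :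
    (∀ ξ : ColourCfg, Xor' (ξ ∈ VertBC SqAdj n m) (ξ ∈ HorizWStarC n m)) ∧
    VertBC SqAdj n m = (HorizWStarC n m)ᶜ := by
  constructor
  · intro ξ
    rcases exists_crossing n m ξ with h | h
    · exact Or.inl ⟨h, fun h' => no_both n m ξ h h'⟩
    · exact Or.inr ⟨h, fun h' => no_both n m ξ h' h⟩
  · ext ξ
    simp only [Set.mem_compl_iff]
    constructor
    · intro h h'
      exact no_both n m ξ h h'
    · intro h
      rcases exists_crossing n m ξ with h2 | h2
      · exact h2
      · exact absurd h2 h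
end DaC
namespace DaC

/-- Every colour configuration restricted to `S_{n,m}` contains either a black
vertical crossing or a white horizontal `*`-crossing, but never both; in
particular `V^b_{n,m} = (H^{w*}_{n,m})ᶜ`. -/
theorem vertB_xor_horizWStar (n m : ℕ) :
    (∀ ξ : ColourCfg, Xor' (ξ ∈ VertBC SqAdj n m) (ξ ∈ HorizWStarC n m)) ∧
    VertBC SqAdj n m = (HorizWStarC n m)ᶜ :=
  vertB_xor_horizWStar' n m

end DaC
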